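/- Let A > 0, 0 < a < 1, ε > 0, γ > 0 and let f(u,w) = Au(u−a)(u−1) + w, g(u,w) = ε(γw − u) be the FitzHugh–Nagumo nonlinearities. Define m_a = − min_{a ≤ u ≤ 1} u(u−a)(u−1). Then m_a > 0, and if γA > 1/m_a there exist constants 0 < u̲ < ū and 0 = w̲ < w̄ forming generalized coupled lower and upper solutions: namely, taking u̲ ∈ (a,1) a point where u(u−a)(u−1) attains its minimum −m_a, w̄ = A m_a, and any ū with 1 < ū ≤ γ A m_a, one has f(u̲, w) ≤ 0 for all w ∈ [0, w̄], f(ū, w) ≥ 0 for all w ∈ [0, w̄], g(u, 0) ≤ 0 for all u ∈ [u̲, ū], and g(u, w̄) ≥ 0 for all u ∈ [u̲, ū]. -/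
import Mathlib

/-- **Positive constant upper/lower solutions for FitzHugh–Nagumo when `γA` is large.**
With `f(u,w) = A u(u-a)(u-1) + w`, `g(u,w) = ε(γw - u)` and
`m_a = - min_{a ≤ u ≤ 1} u(u-a)(u-1)`, one has `m_a > 0`; the minimum is attained at
some `u̲ ∈ (a,1)`, and if `γA > 1/m_a` then for any such minimizer `u̲`, for
`w̄ = A m_a` and any `ū` with `1 < ū ≤ γ A m_a`:
`f(u̲,w) ≤ 0` and `f(ū,w) ≥ 0` for all `w ∈ [0,w̄]`, and `g(u,0) ≤ 0`, `g(u,w̄) ≥ 0`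
for all `u ∈ [u̲,ū]`, i.e. the constants form generalized coupled lower and upper
solutions. -/
theorem fitzHughNagumo_positive_constant_upper_lower_solutions
    (A a ε γ ma : ℝ) (hA : 0 < A) (ha0 : 0 < a) (ha1 : a < 1)
    (hε : 0 < ε) (hγ : 0 < γ)
    (hma : ma = -sInf ((fun u : ℝ => u * (u - a) * (u - 1)) '' Set.Icc a 1))
    (f g : ℝ → ℝ → ℝ)
    (hf : ∀ u w, f u w = A * u * (u - a) * (u - 1) + w)
    (hg : ∀ u w, g u w = ε * (γ * w - u)) :
    0 < ma ∧
    (∃ ul ∈ Set.Ioo a 1, ul * (ul - a) * (ul - 1) = -ma) ∧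
    (1 / ma < γ * A →
      ∀ ul ∈ Set.Ioo a 1, ul * (ul - a) * (ul - 1) = -ma →
      ∀ ub : ℝ, 1 < ub → ub ≤ γ * A * ma →
        (∀ w ∈ Set.Icc (0 : ℝ) (A * ma), f ul w ≤ 0) ∧
        (∀ w ∈ Set.Icc (0 : ℝ) (A * ma), 0 ≤ f ub w) ∧
        (∀ u ∈ Set.Icc ul ub, g u 0 ≤ 0) ∧
        (∀ u ∈ Set.Icc ul ub, 0 ≤ g u (A * ma))) := by
  set φ : ℝ → ℝ := fun u : ℝ => u * (u - a) * (u - 1) with hφ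
  have hcomp : IsCompact (Set.Icc a 1) := isCompact_Icc
  have hne : (Set.Icc a 1).Nonempty := Set.nonempty_Icc.2 ha1.le
  have hcont : ContinuousOn φ (Set.Icc a 1) := (by continuity : Continuous φ).continuousOn
  obtain ⟨x, hx, hxeq⟩ := hcomp.exists_sInf_image_eq hne hcont
  -- midpoint has negative value
  set u0 : ℝ := (a + 1) / 2 with hu0
  have hu0mem : u0 ∈ Set.Icc a 1 := ⟨by linarith, by linarith⟩
  have hφu0 : φ u0 < 0 := by
    have h1 : (0:ℝ) < u0 := by simp only [hu0]; linarith
    have h2 : (0:ℝ) < u0 - a := by simp only [hu0]; linarith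
    have h3 : u0 - 1 < 0 := by simp only [hu0]; linarith
    have := mul_neg_of_pos_of_neg (mul_pos h1 h2) h3
    simpa [hφ] using this
  have hsInf_le : sInf (φ '' Set.Icc a 1) ≤ φ u0 :=
    csInf_le (hcomp.image_of_continuousOn hcont).bddBelow ⟨u0, hu0mem, rfl⟩
  have hma_pos : 0 < ma := by
    rw [hma]
    have : sInf (φ '' Set.Icc a 1) < 0 := lt_of_le_of_lt hsInf_le hφu0
    linarith
  have hxval : φ x = -ma := by rw [hma] at *; linarith [hxeq]
  have hxneg : φ x < 0 := by rw [hxval]; linarith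
  have hxIoo : x ∈ Set.Ioo a 1 := by
    rcases hx.1.lt_or_eq with h | h
    · rcases hx.2.lt_or_eq with h' | h'
      · exact ⟨h, h'⟩
      · exfalso; rw [hφ] at hxneg; simp [h'] at hxneg
    · exfalso; rw [hφ] at hxneg; simp [← h] at hxneg
  refine ⟨hma_pos, ⟨x, hxIoo, hxval⟩, ?_⟩
  intro hγA ul hul hulval ub hub1 hubγ
  have hul0 : 0 < ul := lt_trans ha0 hul.1
  refine ⟨?_, ?_, ?_, ?_⟩
  · intro w hw
    rw [hf]
    have : A * ul * (ul - a) * (ul - 1) = A * (-ma) := by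
      rw [← hulval]; ring
    rw [this]
    have := hw.2
    nlinarith
  · intro w hw
    rw [hf]
    have hcube : 0 ≤ ub * (ub - a) * (ub - 1) := by nlinarith [mul_pos (mul_pos (lt_trans ha0 (lt_trans ha1 hub1)) (by linarith : (0:ℝ) < ub - a)) (by linarith : (0:ℝ) < ub - 1)]
    nlinarith [hw.1]
  · intro u hu
    rw [hg]
    have : ul ≤ u := hu.1
    nlinarith
  · intro u hu
    rw [hg]
    have : u ≤ ub := hu.2
    nlinarith
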